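/- arXiv:1502.01118 — 3 statements merged into one kernel-verified Lean document; each statement's English description precedes it below -/
import Mathlib

section
/- Let P be a Borel probability measure on ℝ^d × ℝ with (X,Y) ∼ P. Let (b_n^0)_{n≥1} be a sequence in ℝ, (b_n)_{n≥1} a sequence in ℝ^d, and (A_n)_{n≥1} a sequence of Borel sets in ℝ^d × ℝ satisfying limsup_n P[A_n] > 0 and limsup_n E_P[|b_n^0 + b_nᵀX − Y|² · 1_{A_n}(X,Y)] < ∞. Then there exist a subsequence of indices (n_k)_{k≥1}, real numbers d_k^0 with d_k^0 → d^0 ∈ ℝ, vectors d_k ∈ ℝ^d with d_k → d ∈ ℝ^d, and Borel sets D_k with D_k ⊆ A_{n_k} and P[A_{n_k} \ D_k] → 0, such that for every k ≥ 1, (b_{n_k}^0 + b_{n_k}ᵀX − Y)·1_{D_k}(X,Y) = (d_k^0 + d_kᵀX − Y)·1_{D_k}(X,Y) holds P-almost surely. -/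
open MeasureTheory Filter Topology Matrix

noncomputable section

abbrev Vec (d : ℕ) := Fin d → ℝ

structure CWMParam (d G : ℕ) where
  pi : Fin G → ℝ
  mu : Fin G → Vec d
  Sigma : Fin G → Matrix (Fin d) (Fin d) ℝ
  b0 : Fin G → ℝ
  b : Fin G → Vec d
  sigma2 : Fin G → ℝ
  pi_nonneg : ∀ g, 0 ≤ pi g
  pi_sum : ∑ g, pi g = 1
  Sigma_posdef : ∀ g, (Sigma g).PosDef
  sigma2_pos : ∀ g, 0 < sigma2 g

variable {d G : ℕ}

/-- The `l`-th eigenvalue of the `g`-th scatter matrix. -/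
def CWMParam.eigval (θ : CWMParam d G) (g : Fin G) (l : Fin d) : ℝ :=
  (θ.Sigma_posdef g).isHermitian.eigenvalues l

/-- The constrained parameter set `Θ_{c_X, c_ε}`. -/
def ThetaSet (d G : ℕ) (cX ceps : ℝ) : Set (CWMParam d G) :=
  {θ | (∀ g1 g2 : Fin G, ∀ l1 l2 : Fin d, θ.eigval g1 l1 ≤ cX * θ.eigval g2 l2) ∧
       (∀ g1 g2 : Fin G, θ.sigma2 g1 ≤ ceps * θ.sigma2 g2)}

/-- Univariate Gaussian density. -/
def gauss1 (y m s2 : ℝ) : ℝ :=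
  (Real.sqrt (2 * Real.pi * s2))⁻¹ * Real.exp (-((y - m) ^ 2) / (2 * s2))

/-- `d`-variate Gaussian density. -/
def gaussd (d : ℕ) (x mu : Vec d) (S : Matrix (Fin d) (Fin d) ℝ) : ℝ :=
  (2 * Real.pi) ^ (-(d : ℝ) / 2) * (Real.sqrt S.det)⁻¹ *
    Real.exp (-(dotProduct (x - mu) (S⁻¹ *ᵥ (x - mu))) / 2)

/-- The `g`-th mixture component density `D_g(x, y; θ)`. -/
def Dg (θ : CWMParam d G) (g : Fin G) (z : Vec d × ℝ) : ℝ :=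
  gauss1 z.2 (dotProduct (θ.b g) z.1 + θ.b0 g) (θ.sigma2 g)
    * gaussd d z.1 (θ.mu g) (θ.Sigma g) * θ.pi g

/-- The mixture density `D(x, y; θ)`. -/
def Dfun (θ : CWMParam d G) (z : Vec d × ℝ) : ℝ := ∑ g, Dg θ g z

/-- The trimming threshold `R(θ, P)`. -/
def Rfun (α : ℝ) (θ : CWMParam d G) (P : Measure (Vec d × ℝ)) : ℝ :=
  sSup {u : ℝ | 1 - α ≤ (P {z | u ≤ Dfun θ z}).toReal}

/-- The trimming set `A(θ, P)`. -/
def Aset (α : ℝ) (θ : CWMParam d G) (P : Measure (Vec d × ℝ)) : Set (Vec d × ℝ) :=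
  {z | Rfun α θ P ≤ Dfun θ z}

/-- The trimmed log-likelihood functional `L(θ, P)`. -/
def Lfun (α : ℝ) (θ : CWMParam d G) (P : Measure (Vec d × ℝ)) : ℝ :=
  ∫ z in Aset α θ P, Real.log (Dfun θ z) ∂P

/-- Condition (PR). -/
def PRcond (d G : ℕ) (α : ℝ) (P : Measure (Vec d × ℝ)) : Prop :=
  ∀ B : Set (Vec d × ℝ), MeasurableSet B → 1 - α ≤ (P B).toReal →
    (∀ (b0 : Fin G → ℝ) (b : Fin G → Vec d),
      0 < P (B \ ⋃ g, {z | z.2 = dotProduct (b g) z.1 + b0 g})) ∧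
    (∀ mu : Fin G → Vec d, 0 < P (B \ ⋃ g, {z | z.1 = mu g}))

/-- Empirical measure of the first `n` observations. -/
def empMeasure (obs : ℕ → Vec d × ℝ) (n : ℕ) : Measure (Vec d × ℝ) :=
  (n : ENNReal)⁻¹ • ∑ i ∈ Finset.range n, Measure.dirac (obs i)

/-- Topology on parameters: the one induced by the product of all components. -/
instance : TopologicalSpace (CWMParam d G) :=
  TopologicalSpace.induced
    (fun θ => (θ.pi, θ.mu, θ.Sigma, θ.b0, θ.b, θ.sigma2)) inferInstance



lemma my_squeeze {a : ℕ → ENNReal} {ε : ℝ → ENNReal}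
    (hε : Tendsto ε atTop (𝓝 0)) (h : ∀ T : ℝ, ∀ᶠ n in atTop, a n ≤ ε T) :
    Tendsto a atTop (𝓝 0) := by
  rw [ENNReal.tendsto_nhds_zero]
  intro η hη
  obtain ⟨T, hT⟩ := (ENNReal.tendsto_nhds_zero.mp hε η hη).exists
  exact (h T).mono fun n hn => hn.trans hT

lemma my_vanish {Ω : Type*} [MeasurableSpace Ω] {μ : Measure Ω} [IsFiniteMeasure μ]
    {g : Ω → ℝ} (hg : Measurable g) {B : ℕ → Set Ω}
    (h : ∀ δ : ℝ, 0 < δ → Tendsto (fun n => μ (B n ∩ {ω | δ ≤ |g ω|})) atTop (𝓝 0)) :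
    Tendsto (fun n => μ (B n \ {ω | g ω = 0})) atTop (𝓝 0) := by
  rw [ENNReal.tendsto_nhds_zero]
  intro η hη
  have hη2 : (0:ENNReal) < η / 2 := ENNReal.div_pos hη.ne' (by norm_num)
  set S : ℕ → Set Ω := fun k => {ω | g ω ≠ 0 ∧ |g ω| ≤ 1 / (k + 1)} with hS
  have hSm : ∀ k, NullMeasurableSet (S k) μ := by
    intro k
    exact (((hg (measurableSet_singleton 0)).compl).inter
      ((hg.abs measurableSet_Iic))).nullMeasurableSet
  have hSanti : Antitone S := by
    intro k l hkl ω hω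
    refine ⟨hω.1, hω.2.trans ?_⟩
    apply one_div_le_one_div_of_le (by positivity)
    have : (k:ℝ) ≤ l := Nat.cast_le.mpr hkl
    linarith
  have hSint : ⋂ k, S k = ∅ := by
    ext ω
    simp only [Set.mem_iInter, Set.mem_empty_iff_false, iff_false, not_forall]
    by_cases h0 : g ω = 0
    · exact ⟨0, fun hc => hc.1 h0⟩
    · obtain ⟨k, hk⟩ := exists_nat_gt (1 / |g ω|)
      refine ⟨k, fun hc => ?_⟩
      have habs : 0 < |g ω| := abs_pos.mpr h0
      have h1 : 1 / |g ω| < k + 1 := by linarith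
      have := hc.2
      have h2 : 1 / ((k:ℝ)+1) < |g ω| := by
        rw [div_lt_iff₀ (by positivity)]
        rw [div_lt_iff₀ habs] at h1
        linarith
      linarith
  have htend : Tendsto (⇑μ ∘ S) atTop (𝓝 (μ (⋂ k, S k))) :=
    tendsto_measure_iInter_atTop hSm hSanti ⟨0, measure_ne_top μ _⟩
  rw [hSint, measure_empty] at htend
  obtain ⟨k, hk⟩ := (ENNReal.tendsto_nhds_zero.mp htend (η/2) hη2).exists
  have hδ : (0:ℝ) < 1 / (k + 1) := by positivity
  filter_upwards [ENNReal.tendsto_nhds_zero.mp (h _ hδ) (η/2) hη2] with n hn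
  have hsub : B n \ {ω | g ω = 0} ⊆ (B n ∩ {ω | 1/((k:ℝ)+1) ≤ |g ω|}) ∪ S k := by
    intro ω hω
    by_cases hc : 1/((k:ℝ)+1) ≤ |g ω|
    · exact Or.inl ⟨hω.1, hc⟩
    · exact Or.inr ⟨hω.2, le_of_not_ge hc⟩
  calc μ (B n \ {ω | g ω = 0}) ≤ μ (B n ∩ {ω | 1/((k:ℝ)+1) ≤ |g ω|}) + μ (S k) :=
        (measure_mono hsub).trans (measure_union_le _ _)
    _ ≤ η/2 + η/2 := add_le_add hn hk
    _ = η := ENNReal.add_halves η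

lemma my_subseq {m : ℕ} {f : ℕ → Fin m → ℝ} {R : ℝ} (h : ∃ᶠ n in atTop, ‖f n‖ ≤ R) :
    ∃ φ : ℕ → ℕ, StrictMono φ ∧ ∃ L, Tendsto (f ∘ φ) atTop (𝓝 L) := by
  obtain ⟨φ, hφ, hφR⟩ := extraction_of_frequently_atTop h
  have hc : IsCompact (Metric.closedBall (0 : Fin m → ℝ) R) := isCompact_closedBall _ _
  obtain ⟨L, _, ψ, hψ, hLψ⟩ := hc.tendsto_subseq (x := f ∘ φ) (fun n => by
    simpa [Metric.mem_closedBall, dist_zero_right] using hφR n)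
  exact ⟨φ ∘ ψ, hφ.comp hψ, L, hLψ⟩

lemma my_abstract (m : ℕ) :
    ∀ {Ω : Type} [inst : MeasurableSpace Ω] (μ : Measure Ω) [IsFiniteMeasure μ]
      (φ : Fin m → Ω → ℝ), (∀ i, Measurable (φ i)) →
      ∀ (B : ℕ → Set Ω), (∀ n, MeasurableSet (B n)) →
      ∀ (f : ℕ → Fin m → ℝ)
      (ε : ℝ → ENNReal), Tendsto ε atTop (𝓝 0) →
      (∀ (T : ℝ) (n : ℕ), μ (B n ∩ {ω | T ≤ |∑ i, f n i * φ i ω|}) ≤ ε T) →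
    ∃ ψ : ℕ → ℕ, StrictMono ψ ∧ ∃ (h : ℕ → Fin m → ℝ) (hl : Fin m → ℝ) (E : ℕ → Set Ω),
      (∀ k, MeasurableSet (E k)) ∧ (∀ k, E k ⊆ B (ψ k)) ∧
      Tendsto (fun k => μ (B (ψ k) \ E k)) atTop (𝓝 0) ∧
      Tendsto h atTop (𝓝 hl) ∧
      ∀ k, ∀ ω ∈ E k, ∑ i, f (ψ k) i * φ i ω = ∑ i, h k i * φ i ω := by
  induction m with
  | zero =>
    intro Ω inst μ instF φ hφm B hBm f ε hε hbound
    exact ⟨id, strictMono_id, 0, 0, B, hBm, fun k => subset_rfl,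
      by simp, tendsto_const_nhds, fun k ω hω => by simp⟩
  | succ m ih =>
    intro Ω inst μ instF φ hφm B hBm f ε hε hbound
    by_cases hbd : ∃ R, ∃ᶠ n in atTop, ‖f n‖ ≤ R
    · -- bounded case
      obtain ⟨R, hR⟩ := hbd
      obtain ⟨ψ, hψ, L, hL⟩ := my_subseq hR
      exact ⟨ψ, hψ, fun k => f (ψ k), L, fun k => B (ψ k),
        fun k => hBm _, fun k => subset_rfl, by simp, hL, fun k ω hω => rfl⟩
    · -- unbounded case
      push_neg at hbd
      have hub : ∀ R : ℝ, ∀ᶠ n in atTop, R < ‖f n‖ := fun R => by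
        filter_upwards [hbd R] with n hn; exact hn
      classical
      set v : ℕ → Fin (m+1) → ℝ := fun n => ‖f n‖⁻¹ • f n with hv_def
      have hv_le : ∀ n, ‖v n‖ ≤ 1 := by
        intro n
        rw [hv_def]
        rcases eq_or_ne (f n) 0 with h0 | h0
        · simp [h0]
        · simp only [norm_smul, norm_inv, norm_norm]
          rw [inv_mul_cancel₀ (norm_ne_zero_iff.mpr h0)]
      obtain ⟨φ₁, hφ₁, vL, hvL⟩ := my_subseq (f := v) (R := 1)
        (Frequently.of_forall (fun n => hv_le n))
      have hφ₁top : Tendsto φ₁ atTop atTop := hφ₁.tendsto_atTop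
      have hpos : ∀ᶠ n in atTop, 0 < ‖f (φ₁ n)‖ := hφ₁top.eventually (hub 0)
      have hnorm1 : ‖vL‖ = 1 := by
        have h1 : Tendsto (fun n => ‖v (φ₁ n)‖) atTop (𝓝 ‖vL‖) := hvL.norm
        have h2 : (fun n => ‖v (φ₁ n)‖) =ᶠ[atTop] fun _ => (1:ℝ) := by
          filter_upwards [hpos] with n hn
          simp only [hv_def, norm_smul, norm_inv, norm_norm]
          rw [inv_mul_cancel₀ hn.ne']
        exact tendsto_nhds_unique (h1.congr' h2) tendsto_const_nhds
      have hvLne : vL ≠ 0 := fun hc => by simp [hc] at hnorm1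
      obtain ⟨i₀, hi₀⟩ : ∃ i₀, vL i₀ ≠ 0 := by
        by_contra hc
        push_neg at hc
        exact hvLne (funext hc)
      -- pointwise convergence of the evaluated functions
      have hGm : ∀ c : Fin (m+1) → ℝ, Measurable (fun ω => ∑ i, c i * φ i ω) :=
        fun c => Finset.measurable_sum _ (fun i _ => (hφm i).const_mul (c i))
      have hptwise : ∀ ω, Tendsto (fun n => ∑ i, v (φ₁ n) i * φ i ω) atTop
          (𝓝 (∑ i, vL i * φ i ω)) := by
        intro ω
        have hc : Continuous (fun c : Fin (m+1) → ℝ => ∑ i, c i * φ i ω) :=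
          continuous_finset_sum _ (fun i _ => (continuous_apply i).mul continuous_const)
        exact (hc.tendsto vL).comp hvL
      have htim : TendstoInMeasure μ (fun n ω => ∑ i, v (φ₁ n) i * φ i ω) atTop
          (fun ω => ∑ i, vL i * φ i ω) :=
        tendstoInMeasure_of_tendsto_ae (fun n => (hGm _).aestronglyMeasurable)
          (Eventually.of_forall hptwise)
      -- Claim A
      have claimA : ∀ δ : ℝ, 0 < δ →
          Tendsto (fun n => μ (B (φ₁ n) ∩ {ω | δ ≤ |∑ i, v (φ₁ n) i * φ i ω|})) atTop (𝓝 0) := by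
        intro δ hδ
        apply my_squeeze hε
        intro T
        filter_upwards [hφ₁top.eventually (hub (T/δ)), hpos] with n hn hp
        refine le_trans (measure_mono ?_) (hbound T (φ₁ n))
        apply Set.inter_subset_inter_right
        intro ω hω
        have hfv : ∑ i, f (φ₁ n) i * φ i ω = ‖f (φ₁ n)‖ * ∑ i, v (φ₁ n) i * φ i ω := by
          rw [Finset.mul_sum]
          refine Finset.sum_congr rfl (fun i _ => ?_)
          simp only [hv_def, Pi.smul_apply, smul_eq_mul]
          field_simp
        simp only [Set.mem_setOf_eq] at hω ⊢
        rw [hfv, abs_mul, abs_norm]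
        calc T = (T/δ) * δ := by field_simp
          _ ≤ ‖f (φ₁ n)‖ * δ := by nlinarith
          _ ≤ ‖f (φ₁ n)‖ * |∑ i, v (φ₁ n) i * φ i ω| := by nlinarith [norm_nonneg (f (φ₁ n))]
      -- Claim B
      have claimB : ∀ δ : ℝ, 0 < δ →
          Tendsto (fun n => μ (B (φ₁ n) ∩ {ω | δ ≤ |∑ i, vL i * φ i ω|})) atTop (𝓝 0) := by
        intro δ hδ
        have hδ2 : 0 < δ/2 := by linarith
        have hsum := (claimA (δ/2) hδ2).add (tendstoInMeasure_iff_dist.mp htim (δ/2) hδ2)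
        rw [add_zero] at hsum
        refine tendsto_of_tendsto_of_tendsto_of_le_of_le tendsto_const_nhds hsum
          (fun n => zero_le) (fun n => ?_)
        refine le_trans (measure_mono ?_) (measure_union_le _ _)
        intro ω hω
        by_cases hc : δ/2 ≤ |∑ i, v (φ₁ n) i * φ i ω|
        · exact Or.inl ⟨hω.1, hc⟩
        · refine Or.inr ?_
          simp only [Set.mem_setOf_eq, Real.dist_eq] at *
          have h4 : δ ≤ |∑ i, vL i * φ i ω| := hω.2
          have h3 := abs_sub_abs_le_abs_sub (∑ i, vL i * φ i ω) (∑ i, v (φ₁ n) i * φ i ω)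
          rw [abs_sub_comm] at h3
          push_neg at hc
          linarith
      -- the limit hyperplane
      have hvan : Tendsto (fun n => μ (B (φ₁ n) \ {ω | (∑ i, vL i * φ i ω) = 0})) atTop (𝓝 0) :=
        my_vanish (hGm vL) claimB
      set E' : ℕ → Set Ω := fun n => B (φ₁ n) ∩ {ω | (∑ i, vL i * φ i ω) = 0} with hE'_def
      have hE'm : ∀ n, MeasurableSet (E' n) :=
        fun n => (hBm _).inter ((hGm vL) (measurableSet_singleton 0))
      have hE'diff : Tendsto (fun n => μ (B (φ₁ n) \ E' n)) atTop (𝓝 0) := by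
        refine hvan.congr (fun n => ?_)
        rw [hE'_def]
        congr 1
        rw [Set.diff_self_inter]
      -- new coefficients
      set g' : ℕ → Fin m → ℝ := fun n j =>
        f (φ₁ n) (i₀.succAbove j) - (f (φ₁ n) i₀ / vL i₀) * vL (i₀.succAbove j) with hg'_def
      have halg : ∀ n ω, (∑ i, vL i * φ i ω) = 0 →
          (∑ j, g' n j * φ (i₀.succAbove j) ω) = ∑ i, f (φ₁ n) i * φ i ω := by
        intro n ω h0
        have e1 := Fin.sum_univ_succAbove (fun i => f (φ₁ n) i * φ i ω) i₀
        have e2 := Fin.sum_univ_succAbove (fun i => vL i * φ i ω) i₀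
        rw [h0] at e2
        have e3 : (∑ j, g' n j * φ (i₀.succAbove j) ω)
            = (∑ j, f (φ₁ n) (i₀.succAbove j) * φ (i₀.succAbove j) ω)
              - (f (φ₁ n) i₀ / vL i₀) * ∑ j, vL (i₀.succAbove j) * φ (i₀.succAbove j) ω := by
          rw [Finset.mul_sum, ← Finset.sum_sub_distrib]
          exact Finset.sum_congr rfl (fun j _ => by rw [hg'_def]; ring)
        rw [e3, e1]
        have e4 : (∑ j, vL (i₀.succAbove j) * φ (i₀.succAbove j) ω) = -(vL i₀ * φ i₀ ω) := by
          linarith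
        rw [e4]
        field_simp
        ring
      -- apply the induction hypothesis
      have hbound' : ∀ (T : ℝ) (n : ℕ),
          μ (E' n ∩ {ω | T ≤ |∑ j, g' n j * φ (i₀.succAbove j) ω|}) ≤ ε T := by
        intro T n
        have hseteq : E' n ∩ {ω | T ≤ |∑ j, g' n j * φ (i₀.succAbove j) ω|}
            = E' n ∩ {ω | T ≤ |∑ i, f (φ₁ n) i * φ i ω|} := by
          ext ω
          constructor
          · rintro ⟨h1, h2⟩
            refine ⟨h1, ?_⟩
            simp only [Set.mem_setOf_eq] at h2 ⊢
            rw [← halg n ω h1.2]; exact h2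
          · rintro ⟨h1, h2⟩
            refine ⟨h1, ?_⟩
            simp only [Set.mem_setOf_eq] at h2 ⊢
            rw [halg n ω h1.2]; exact h2
        rw [hseteq]
        refine le_trans (measure_mono ?_) (hbound T (φ₁ n))
        exact Set.inter_subset_inter_left _ Set.inter_subset_left
      obtain ⟨ψ₂, hψ₂, h', hl', E'', hE''m, hE''sub, hE''diff, hh', heq'⟩ :=
        ih μ (fun j => φ (i₀.succAbove j)) (fun j => hφm _) E' hE'm g' ε hε hbound'
      -- assemble the final data
      refine ⟨φ₁ ∘ ψ₂, hφ₁.comp hψ₂, fun k => (i₀.insertNth (0:ℝ) (h' k) : Fin (m+1) → ℝ),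
        (i₀.insertNth (0:ℝ) hl' : Fin (m+1) → ℝ),
        E'', hE''m, fun k => (hE''sub k).trans Set.inter_subset_left, ?_, ?_, ?_⟩
      · -- measure of the difference tends to 0
        have hd1 : Tendsto (fun k => μ (B (φ₁ (ψ₂ k)) \ E' (ψ₂ k))) atTop (𝓝 0) :=
          hE'diff.comp hψ₂.tendsto_atTop
        have hsum := hd1.add hE''diff
        rw [add_zero] at hsum
        refine tendsto_of_tendsto_of_tendsto_of_le_of_le tendsto_const_nhds hsum
          (fun k => zero_le) (fun k => ?_)
        refine le_trans (measure_mono ?_) (measure_union_le _ _)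
        intro ω hω
        by_cases hc : ω ∈ E' (ψ₂ k)
        · exact Or.inr ⟨hc, hω.2⟩
        · exact Or.inl ⟨hω.1, hc⟩
      · -- convergence of the coefficients
        rw [tendsto_pi_nhds]
        intro i
        refine i₀.succAboveCases ?_ ?_ i
        · simp only [Fin.insertNth_apply_same]
          exact tendsto_const_nhds
        · intro j
          simp only [Fin.insertNth_apply_succAbove]
          exact tendsto_pi_nhds.mp hh' j
      · -- the equality on the good sets
        intro k ω hω
        have h0 : (∑ i, vL i * φ i ω) = 0 := (hE''sub k hω).2
        calc (∑ i, f (φ₁ (ψ₂ k)) i * φ i ω)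
            = ∑ j, g' (ψ₂ k) j * φ (i₀.succAbove j) ω := (halg (ψ₂ k) ω h0).symm
          _ = ∑ j, h' k j * φ (i₀.succAbove j) ω := heq' k ω hω
          _ = ∑ i, (i₀.insertNth (0:ℝ) (h' k) : Fin (m+1) → ℝ) i * φ i ω := by
              rw [Fin.sum_univ_succAbove (fun i => (i₀.insertNth (0:ℝ) (h' k) : Fin (m+1) → ℝ) i * φ i ω) i₀]
              simp [Fin.insertNth_apply_same, Fin.insertNth_apply_succAbove]


/-- Lemma 1: bounded representation of regression coefficients. -/
theorem statement2 (d : ℕ) (hd : 1 ≤ d)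
    (P : Measure (Vec d × ℝ)) [IsProbabilityMeasure P]
    (b0 : ℕ → ℝ) (b : ℕ → Vec d) (A : ℕ → Set (Vec d × ℝ))
    (hAmeas : ∀ n, MeasurableSet (A n))
    (h1 : 0 < Filter.limsup (fun n => P (A n)) atTop)
    (h2 : Filter.limsup
        (fun n => ∫⁻ z in A n, ENNReal.ofReal ((b0 n + dotProduct (b n) z.1 - z.2) ^ 2) ∂P)
        atTop < ⊤) :
    ∃ φ : ℕ → ℕ, StrictMono φ ∧
      ∃ (d0 : ℕ → ℝ) (dv : ℕ → Vec d) (D : ℕ → Set (Vec d × ℝ)) (dl0 : ℝ) (dl : Vec d),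
        (∀ k, MeasurableSet (D k)) ∧ (∀ k, D k ⊆ A (φ k)) ∧
        Tendsto (fun k => P (A (φ k) \ D k)) atTop (nhds 0) ∧
        Tendsto d0 atTop (nhds dl0) ∧ Tendsto dv atTop (nhds dl) ∧
        ∀ k, ∀ᵐ z ∂P, z ∈ D k →
          b0 (φ k) + dotProduct (b (φ k)) z.1 - z.2
            = d0 k + dotProduct (dv k) z.1 - z.2 := by
  classical
  set I : ℕ → ENNReal := fun n =>
    ∫⁻ z in A n, ENNReal.ofReal ((b0 n + dotProduct (b n) z.1 - z.2) ^ 2) ∂P with hI_def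
  set C : ENNReal := Filter.limsup I atTop + 1 with hC_def
  have hCne : C ≠ ⊤ := by
    rw [hC_def]
    exact ENNReal.add_ne_top.mpr ⟨h2.ne, ENNReal.one_ne_top⟩
  have hIC : ∀ᶠ n in atTop, I n < C :=
    Filter.eventually_lt_of_limsup_lt
      (by rw [hC_def]; exact ENNReal.lt_add_right h2.ne one_ne_zero)
  obtain ⟨N, hN⟩ := eventually_atTop.mp hIC
  -- the evaluation functions
  set Φ : Fin (d+1) → (Vec d × ℝ) → ℝ :=
    Fin.cons (fun _ => 1) (fun (i : Fin d) (z : Vec d × ℝ) => z.1 i) with hΦ_def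
  have hΦm : ∀ i, Measurable (Φ i) := by
    intro i
    refine Fin.cases ?_ ?_ i
    · rw [hΦ_def]; simp only [Fin.cons_zero]; exact measurable_const
    · intro j
      rw [hΦ_def]; simp only [Fin.cons_succ]
      exact (measurable_pi_apply j).comp measurable_fst
  set fc : ℕ → Fin (d+1) → ℝ := fun n => Fin.cons (b0 (n+N)) (b (n+N)) with hfc_def
  have hsumc : ∀ (c : Fin (d+1) → ℝ) (z : Vec d × ℝ),
      (∑ i, c i * Φ i z) = c 0 + ∑ i : Fin d, c i.succ * z.1 i := by
    intro c z
    rw [Fin.sum_univ_succ]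
    rw [hΦ_def]
    simp only [Fin.cons_zero, Fin.cons_succ, mul_one]
  have hsum : ∀ (n : ℕ) (z : Vec d × ℝ),
      (∑ i, fc n i * Φ i z) = b0 (n+N) + dotProduct (b (n+N)) z.1 := by
    intro n z
    rw [hsumc, hfc_def]
    simp only [Fin.cons_zero, Fin.cons_succ]
    rfl
  -- the tightness function
  set ε : ℝ → ENNReal := fun T =>
    C / ENNReal.ofReal ((T/2)^2) + P {z : Vec d × ℝ | T/2 ≤ |z.2|} with hε_def
  have hεt : Tendsto ε atTop (𝓝 0) := by
    rw [ENNReal.tendsto_nhds_zero]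
    intro η hη
    have hη2 : (0:ENNReal) < η / 2 := ENNReal.div_pos hη.ne' (by norm_num)
    -- first term
    have h1' : Tendsto (fun T : ℝ => (T/2)^2) atTop atTop :=
      (tendsto_pow_atTop two_ne_zero).comp (tendsto_id.atTop_div_const two_pos)
    have h2' : Tendsto (fun T : ℝ => ENNReal.ofReal ((T/2)^2)) atTop (𝓝 ⊤) :=
      ENNReal.tendsto_ofReal_atTop.comp h1'
    have h3' : Tendsto (fun T : ℝ => (ENNReal.ofReal ((T/2)^2))⁻¹) atTop (𝓝 0) := by
      have := h2'.inv
      simpa using this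
    have h4' : Tendsto (fun T : ℝ => C / ENNReal.ofReal ((T/2)^2)) atTop (𝓝 0) := by
      simp only [div_eq_mul_inv]
      have := ENNReal.Tendsto.const_mul h3' (Or.inr hCne)
      simpa [div_eq_mul_inv] using this
    have hev1 := ENNReal.tendsto_nhds_zero.mp h4' (η/2) hη2
    -- second term: tail of |z.2|
    set S : ℕ → Set (Vec d × ℝ) := fun k => {z | (k:ℝ) ≤ |z.2|} with hS_def
    have hSm : ∀ k, NullMeasurableSet (S k) P := by
      intro k
      exact (measurable_snd.abs measurableSet_Ici).nullMeasurableSet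
    have hSanti : Antitone S := by
      intro k l hkl z hz
      simp only [hS_def, Set.mem_setOf_eq] at hz ⊢
      exact le_trans (Nat.cast_le.mpr hkl) hz
    have hSint : ⋂ k, S k = ∅ := by
      ext z
      simp only [Set.mem_iInter, Set.mem_empty_iff_false, iff_false, not_forall]
      obtain ⟨k, hk⟩ := exists_nat_gt |z.2|
      exact ⟨k, fun hc => absurd hc (not_le.mpr hk)⟩
    have htail : Tendsto (⇑P ∘ S) atTop (𝓝 0) := by
      have := tendsto_measure_iInter_atTop hSm hSanti ⟨0, measure_ne_top P _⟩
      rwa [hSint, measure_empty] at this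
    obtain ⟨k, hk⟩ := (ENNReal.tendsto_nhds_zero.mp htail (η/2) hη2).exists
    filter_upwards [hev1, eventually_ge_atTop (2*(k:ℝ))] with T hT1 hT2
    have hsub : {z : Vec d × ℝ | T/2 ≤ |z.2|} ⊆ S k := by
      intro z hz
      have hz' : T/2 ≤ |z.2| := hz
      show (k:ℝ) ≤ |z.2|
      linarith
    calc ε T ≤ η/2 + η/2 := add_le_add hT1 (le_trans (measure_mono hsub) hk)
      _ = η := ENNReal.add_halves η
  -- the Chebyshev + tail bound
  have hbound : ∀ (T : ℝ) (n : ℕ),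
      P (A (n+N) ∩ {z | T ≤ |∑ i, fc n i * Φ i z|}) ≤ ε T := by
    intro T n
    have hset : {z : Vec d × ℝ | T ≤ |∑ i, fc n i * Φ i z|}
        = {z | T ≤ |b0 (n+N) + dotProduct (b (n+N)) z.1|} := by
      ext z; rw [Set.mem_setOf_eq, Set.mem_setOf_eq, hsum]
    rw [hset]
    rcases le_or_gt T 0 with hT | hT
    · have huniv : {z : Vec d × ℝ | T/2 ≤ |z.2|} = Set.univ := by
        ext z
        simp only [Set.mem_setOf_eq, Set.mem_univ, iff_true]
        have := abs_nonneg z.2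
        linarith
      rw [hε_def]
      refine le_trans ?_ le_add_self
      exact measure_mono (by rw [huniv]; exact Set.subset_univ _)
    · -- T > 0
      have hres : Measurable (fun z : Vec d × ℝ =>
          b0 (n+N) + dotProduct (b (n+N)) z.1 - z.2) := by
        apply Measurable.sub _ measurable_snd
        apply Measurable.add measurable_const
        exact Finset.measurable_sum _
          (fun i _ => ((measurable_pi_apply i).comp measurable_fst).const_mul _)
      have hsplit : A (n+N) ∩ {z | T ≤ |b0 (n+N) + dotProduct (b (n+N)) z.1|}
          ⊆ (A (n+N) ∩ {z | T/2 ≤ |b0 (n+N) + dotProduct (b (n+N)) z.1 - z.2|})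
            ∪ {z : Vec d × ℝ | T/2 ≤ |z.2|} := by
        rintro z ⟨hz1, hz2⟩
        by_cases hc : T/2 ≤ |z.2|
        · exact Or.inr hc
        · refine Or.inl ⟨hz1, ?_⟩
          simp only [Set.mem_setOf_eq] at hz2 ⊢
          push_neg at hc
          have h5 := abs_sub_abs_le_abs_sub (b0 (n+N) + dotProduct (b (n+N)) z.1) z.2
          have h6 : |b0 (n+N) + dotProduct (b (n+N)) z.1 - z.2|
              ≥ |b0 (n+N) + dotProduct (b (n+N)) z.1| - |z.2| := h5
          linarith
      refine le_trans (measure_mono hsplit) (le_trans (measure_union_le _ _) ?_)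
      rw [hε_def]
      apply add_le_add_left
      -- Chebyshev
      have hTpos : (0:ℝ) < (T/2)^2 := by positivity
      have hcheb : ENNReal.ofReal ((T/2)^2)
          * (P.restrict (A (n+N))) {z | ENNReal.ofReal ((T/2)^2)
            ≤ ENNReal.ofReal ((b0 (n+N) + dotProduct (b (n+N)) z.1 - z.2)^2)} ≤ I (n+N) := by
        rw [hI_def]
        exact mul_meas_ge_le_lintegral₀
          ((hres.pow_const 2).ennreal_ofReal.aemeasurable) _
      have hmono : P (A (n+N) ∩ {z | T/2 ≤ |b0 (n+N) + dotProduct (b (n+N)) z.1 - z.2|})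
          ≤ (P.restrict (A (n+N))) {z | ENNReal.ofReal ((T/2)^2)
            ≤ ENNReal.ofReal ((b0 (n+N) + dotProduct (b (n+N)) z.1 - z.2)^2)} := by
        rw [Measure.restrict_apply' (hAmeas _)]
        refine measure_mono ?_
        rw [Set.inter_comm]
        apply Set.inter_subset_inter_left
        intro z hz
        simp only [Set.mem_setOf_eq] at hz ⊢
        apply ENNReal.ofReal_le_ofReal
        calc (T/2)^2 ≤ |b0 (n+N) + dotProduct (b (n+N)) z.1 - z.2|^2 := by
              apply pow_le_pow_left₀ (by linarith) hz
          _ = (b0 (n+N) + dotProduct (b (n+N)) z.1 - z.2)^2 := sq_abs _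
      refine le_trans hmono ?_
      rw [ENNReal.le_div_iff_mul_le (Or.inl ?_) (Or.inl ?_)]
      · rw [mul_comm]
        exact le_trans hcheb (hN (n+N) (Nat.le_add_left N n)).le
      · simp [ENNReal.ofReal_eq_zero, not_le, hTpos, hT.ne']
      · exact ENNReal.ofReal_ne_top
  -- apply the abstract lemma
  obtain ⟨ψ, hψ, h, hl, E, hEm, hEsub, hEdiff, hh, heq⟩ :=
    my_abstract (d+1) P Φ hΦm (fun n => A (n+N)) (fun n => hAmeas _) fc ε hεt hbound
  refine ⟨fun k => ψ k + N, fun a b hab => by simpa using hψ hab,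
    fun k => h k 0, fun k i => h k i.succ, E, hl 0, fun i => hl i.succ,
    hEm, hEsub, hEdiff, tendsto_pi_nhds.mp hh 0,
    tendsto_pi_nhds.mpr (fun i => tendsto_pi_nhds.mp hh i.succ), ?_⟩
  intro k
  apply Filter.Eventually.of_forall
  intro z hz
  have hkey := heq k z hz
  rw [hsum, hsumc] at hkey
  have : dotProduct (fun i => h k i.succ) z.1 = ∑ i : Fin d, h k i.succ * z.1 i := rfl
  rw [this]
  linarith


end
end

section
/- There exists a constant C, depending only on d, G and α (and not on θ), such that for every Borel probability measure P on ℝ^d × ℝ and every parameter θ: L(θ,P) ≤ −(1/2)[ log(min_g σ_g²)·P[A(θ,P)] + E_P[min_g |b_g^0 + b_gᵀX − Y|²·1_{A(θ,P)}(X,Y)] / max_g σ_g² ] − (1/2)[ d·log(min_{g,l} λ_l(Σ_g))·P[A(θ,P)] + E_P[min_g ‖X − μ_g‖²·1_{A(θ,P)}(X,Y)] / max_{g,l} λ_l(Σ_g) ] + C. -/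
open MeasureTheory Filter Topology Matrix

noncomputable section

variable {d G : ℕ}

section Aux

lemma fin_ciInf_le {ι : Type*} [Fintype ι] [Nonempty ι] (f : ι → ℝ) (i : ι) :
    ⨅ j, f j ≤ f i :=
  ciInf_le (Set.Finite.bddBelow (Set.finite_range f)) i

lemma fin_le_ciSup {ι : Type*} [Fintype ι] [Nonempty ι] (f : ι → ℝ) (i : ι) :
    f i ≤ ⨆ j, f j :=
  le_ciSup (Set.Finite.bddAbove (Set.finite_range f)) i

lemma fin_ciInf_pos {ι : Type*} [Fintype ι] [Nonempty ι] {f : ι → ℝ} (h : ∀ i, 0 < f i) :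
    0 < ⨅ j, f j := by
  obtain ⟨i, hi⟩ := Finite.exists_min f
  have heq : ⨅ j, f j = f i := le_antisymm (fin_ciInf_le f i) (le_ciInf hi)
  rw [heq]; exact h i

lemma sqrt_eq_exp_half_log {x : ℝ} (hx : 0 < x) :
    Real.sqrt x = Real.exp (Real.log x / 2) := by
  have h : x = (Real.exp (Real.log x / 2)) ^ 2 := by
    rw [sq, ← Real.exp_add, add_halves, Real.exp_log hx]
  conv_lhs => rw [h]
  exact Real.sqrt_sq (Real.exp_nonneg _)

lemma inv_sqrt_le_exp {x c : ℝ} (hc : 0 < c) (hcx : c ≤ x) :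
    (Real.sqrt x)⁻¹ ≤ Real.exp (-(Real.log c / 2)) := by
  rw [Real.exp_neg, ← sqrt_eq_exp_half_log hc]
  exact inv_anti₀ (Real.sqrt_pos.2 hc) (Real.sqrt_le_sqrt hcx)

lemma quadform_lb {d : ℕ} {S : Matrix (Fin d) (Fin d) ℝ} (hS : S.PosDef)
    {lam : ℝ} (hl : ∀ l, hS.isHermitian.eigenvalues l ≤ lam) (v : Fin d → ℝ) :
    (v ⬝ᵥ v) / lam ≤ v ⬝ᵥ (S⁻¹ *ᵥ v) := by
  classical
  have hH := hS.isHermitian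
  set U : Matrix (Fin d) (Fin d) ℝ := (hH.eigenvectorUnitary : Matrix (Fin d) (Fin d) ℝ) with hUdef
  have hmem := hH.eigenvectorUnitary.2
  have hU1 : star U * U = 1 := (Matrix.mem_unitaryGroup_iff').mp hmem
  have hU2 : U * star U = 1 := (Matrix.mem_unitaryGroup_iff).mp hmem
  have hUt : star U = Uᵀ := by
    rw [Matrix.star_eq_conjTranspose, Matrix.conjTranspose_eq_transpose_of_trivial]
  set lamf := hH.eigenvalues with hlamf
  have hlpos' : ∀ l, 0 < lamf l := fun l => hS.eigenvalues_pos l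
  set w : Fin d → ℝ := star U *ᵥ v with hw
  have hv : U *ᵥ w = v := by
    rw [hw, Matrix.mulVec_mulVec, hU2, Matrix.one_mulVec]
  set b : Fin d → ℝ := fun l => (lamf l)⁻¹ * w l with hb
  have hdiagb : (Matrix.diagonal lamf) *ᵥ b = w := by
    funext l
    simp [Matrix.mulVec_diagonal, hb, mul_inv_cancel_left₀ (hlpos' l).ne']
  have hspec : S = U * Matrix.diagonal lamf * star U := by
    have := hH.spectral_theorem
    simpa using this
  have hSu : S *ᵥ (U *ᵥ b) = v := by
    rw [hspec, Matrix.mulVec_mulVec, mul_assoc, mul_assoc, hU1, mul_one,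
      ← Matrix.mulVec_mulVec, hdiagb, hv]
  have hdet : IsUnit S.det := isUnit_iff_ne_zero.mpr hS.det_pos.ne'
  have hsinv : S⁻¹ *ᵥ v = U *ᵥ b := by
    rw [← hSu, Matrix.mulVec_mulVec, Matrix.nonsing_inv_mul S hdet, Matrix.one_mulVec]
  have key : ∀ a c : Fin d → ℝ, (U *ᵥ a) ⬝ᵥ (U *ᵥ c) = a ⬝ᵥ c := by
    intro a c
    rw [Matrix.dotProduct_mulVec]
    have h2 : (U *ᵥ a) ᵥ* U = a := by
      rw [← Matrix.mulVec_transpose, Matrix.mulVec_mulVec, ← hUt, hU1, Matrix.one_mulVec]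
    rw [h2]
  have h1 : v ⬝ᵥ (S⁻¹ *ᵥ v) = ∑ l, (lamf l)⁻¹ * (w l) ^ 2 := by
    rw [hsinv, ← hv, key]
    simp only [dotProduct, hb]
    congr 1; funext l; ring
  have h2 : v ⬝ᵥ v = ∑ l, (w l) ^ 2 := by
    rw [← hv, key]
    simp [dotProduct, sq]
  rw [h1, h2, div_eq_mul_inv, Finset.sum_mul]
  apply Finset.sum_le_sum
  intro l _
  rw [mul_comm]
  exact mul_le_mul_of_nonneg_right (inv_anti₀ (hlpos' l) (hl l)) (sq_nonneg _)

lemma gauss1_le {y m s2 cmin cmax f1 : ℝ} (hs2 : 0 < s2) (h1 : 0 < cmin) (h2 : cmin ≤ s2)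
    (h3 : s2 ≤ cmax) (hf2 : f1 ≤ (y - m) ^ 2) :
    gauss1 y m s2 ≤ Real.exp (-(Real.log cmin / 2) - f1 / (2 * cmax)) := by
  have hpi : (3 : ℝ) < Real.pi := Real.pi_gt_three
  have ha : (Real.sqrt (2 * Real.pi * s2))⁻¹ ≤ Real.exp (-(Real.log cmin / 2)) :=
    inv_sqrt_le_exp h1 (by nlinarith)
  have hb : Real.exp (-((y - m) ^ 2) / (2 * s2)) ≤ Real.exp (-(f1 / (2 * cmax))) := by
    apply Real.exp_le_exp.2
    rw [neg_div]
    apply neg_le_neg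
    exact div_le_div₀ (sq_nonneg _) hf2 (by linarith) (by linarith)
  calc gauss1 y m s2
      = (Real.sqrt (2 * Real.pi * s2))⁻¹ * Real.exp (-((y - m) ^ 2) / (2 * s2)) := rfl
    _ ≤ Real.exp (-(Real.log cmin / 2)) * Real.exp (-(f1 / (2 * cmax))) :=
        mul_le_mul ha hb (Real.exp_nonneg _) (Real.exp_nonneg _)
    _ = Real.exp (-(Real.log cmin / 2) - f1 / (2 * cmax)) := by
        rw [← Real.exp_add]
        all_goals ring_nf

lemma gaussd_le {d : ℕ} [Nonempty (Fin d)] (x mu : Vec d) {S : Matrix (Fin d) (Fin d) ℝ}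
    (hS : S.PosDef) {lmin lmax f2 : ℝ} (h1 : 0 < lmin)
    (h2 : ∀ l, lmin ≤ hS.isHermitian.eigenvalues l)
    (h3 : ∀ l, hS.isHermitian.eigenvalues l ≤ lmax)
    (hf2 : f2 ≤ ∑ i, (x i - mu i) ^ 2) :
    gaussd d x mu S ≤ Real.exp (-((d : ℝ) * Real.log lmin / 2) - f2 / (2 * lmax)) := by
  have hpi : (3 : ℝ) < Real.pi := Real.pi_gt_three
  have hlmax : 0 < lmax := lt_of_lt_of_le (hS.eigenvalues_pos (Classical.arbitrary _)) (h3 _)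
  have hdet : S.det = ∏ l, hS.isHermitian.eigenvalues l := by
    have := hS.isHermitian.det_eq_prod_eigenvalues
    simpa using this
  have hdetge : lmin ^ d ≤ S.det := by
    rw [hdet]
    calc lmin ^ d = ∏ _l : Fin d, lmin := by simp
      _ ≤ ∏ l, hS.isHermitian.eigenvalues l :=
        Finset.prod_le_prod (fun _ _ => h1.le) (fun l _ => h2 l)
  have ha : ((2 * Real.pi) ^ (-(d : ℝ) / 2) : ℝ) ≤ 1 := by
    apply Real.rpow_le_one_of_one_le_of_nonpos (by nlinarith)
    have : (0 : ℝ) ≤ (d : ℝ) / 2 := by positivity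
    linarith
  have hb : (Real.sqrt S.det)⁻¹ ≤ Real.exp (-((d : ℝ) * Real.log lmin / 2)) := by
    have h := inv_sqrt_le_exp (x := S.det) (c := lmin ^ d) (by positivity) hdetge
    rwa [Real.log_pow] at h
  have hq : f2 / lmax ≤ (x - mu) ⬝ᵥ (S⁻¹ *ᵥ (x - mu)) := by
    have hvv : (x - mu) ⬝ᵥ (x - mu) = ∑ i, (x i - mu i) ^ 2 := by
      simp [dotProduct, sq]
    calc f2 / lmax ≤ (∑ i, (x i - mu i) ^ 2) / lmax := (div_le_div_iff_of_pos_right hlmax).2 hf2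
      _ = ((x - mu) ⬝ᵥ (x - mu)) / lmax := by rw [hvv]
      _ ≤ _ := quadform_lb hS h3 _
  have hc : Real.exp (-((x - mu) ⬝ᵥ (S⁻¹ *ᵥ (x - mu))) / 2) ≤ Real.exp (-(f2 / (2 * lmax))) := by
    apply Real.exp_le_exp.2
    rw [neg_div]
    apply neg_le_neg
    have heq : f2 / (2 * lmax) = (f2 / lmax) / 2 := by ring
    rw [heq]
    linarith
  calc gaussd d x mu S
      = (2 * Real.pi) ^ (-(d : ℝ) / 2) * (Real.sqrt S.det)⁻¹
          * Real.exp (-((x - mu) ⬝ᵥ (S⁻¹ *ᵥ (x - mu))) / 2) := rfl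
    _ ≤ 1 * Real.exp (-((d : ℝ) * Real.log lmin / 2)) * Real.exp (-(f2 / (2 * lmax))) := by
        apply mul_le_mul _ hc (Real.exp_nonneg _) (by positivity)
        exact mul_le_mul ha hb (inv_nonneg.2 (Real.sqrt_nonneg _)) zero_le_one
    _ = Real.exp (-((d : ℝ) * Real.log lmin / 2) - f2 / (2 * lmax)) := by
        rw [one_mul, ← Real.exp_add]
        all_goals ring_nf

variable {d G : ℕ}

lemma Dfun_pos [Nonempty (Fin d)] [Nonempty (Fin G)] (θ : CWMParam d G) (z : Vec d × ℝ) :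
    0 < Dfun θ z := by
  have hpi := Real.pi_pos
  have hg1 : ∀ g : Fin G, 0 < gauss1 z.2 (dotProduct (θ.b g) z.1 + θ.b0 g) (θ.sigma2 g) := by
    intro g
    unfold gauss1
    have h2 : (0:ℝ) < 2 * Real.pi * θ.sigma2 g := by
      have := θ.sigma2_pos g; positivity
    exact mul_pos (inv_pos.2 (Real.sqrt_pos.2 h2)) (Real.exp_pos _)
  have hgd : ∀ g : Fin G, 0 < gaussd d z.1 (θ.mu g) (θ.Sigma g) := by
    intro g
    unfold gaussd
    exact mul_pos (mul_pos (Real.rpow_pos_of_pos (by positivity) _)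
      (inv_pos.2 (Real.sqrt_pos.2 (θ.Sigma_posdef g).det_pos))) (Real.exp_pos _)
  have hterm : ∀ g : Fin G, 0 ≤ Dg θ g z := fun g =>
    mul_nonneg (mul_nonneg (hg1 g).le (hgd g).le) (θ.pi_nonneg g)
  obtain ⟨g0, hg0⟩ : ∃ g, 0 < θ.pi g := by
    by_contra h
    push_neg at h
    have hz : ∑ g, θ.pi g = 0 :=
      Finset.sum_eq_zero fun g _ => le_antisymm (h g) (θ.pi_nonneg g)
    rw [θ.pi_sum] at hz
    norm_num at hz
  exact Finset.sum_pos' (fun g _ => hterm g)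
    ⟨g0, Finset.mem_univ g0, mul_pos (mul_pos (hg1 g0) (hgd g0)) hg0⟩

lemma Dfun_le [Nonempty (Fin d)] [Nonempty (Fin G)] (θ : CWMParam d G) (z : Vec d × ℝ) :
    Dfun θ z ≤ Real.exp (
      -(Real.log (⨅ g, θ.sigma2 g) / 2)
      - (d : ℝ) * Real.log (⨅ g : Fin G, ⨅ l : Fin d, θ.eigval g l) / 2
      - (⨅ g : Fin G, (θ.b0 g + dotProduct (θ.b g) z.1 - z.2) ^ 2) / (2 * ⨆ g, θ.sigma2 g)
      - (⨅ g : Fin G, ∑ i, (z.1 i - θ.mu g i) ^ 2)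
          / (2 * ⨆ g : Fin G, ⨆ l : Fin d, θ.eigval g l)) := by
  set smin := ⨅ g, θ.sigma2 g with hsmin_def
  set smax := ⨆ g, θ.sigma2 g with hsmax_def
  set lmin := ⨅ g : Fin G, ⨅ l : Fin d, θ.eigval g l with hlmin_def
  set lmax := ⨆ g : Fin G, ⨆ l : Fin d, θ.eigval g l with hlmax_def
  set f1 := ⨅ g : Fin G, (θ.b0 g + dotProduct (θ.b g) z.1 - z.2) ^ 2 with hf1_def
  set f2 := ⨅ g : Fin G, ∑ i, (z.1 i - θ.mu g i) ^ 2 with hf2_def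
  set E := -(Real.log smin / 2) - (d : ℝ) * Real.log lmin / 2
    - f1 / (2 * smax) - f2 / (2 * lmax) with hE_def
  have hsmin : 0 < smin := fin_ciInf_pos θ.sigma2_pos
  have hlminpos : 0 < lmin :=
    fin_ciInf_pos fun g => fin_ciInf_pos fun l => (θ.Sigma_posdef g).eigenvalues_pos l
  have hT : ∀ g : Fin G, gauss1 z.2 (dotProduct (θ.b g) z.1 + θ.b0 g) (θ.sigma2 g)
      * gaussd d z.1 (θ.mu g) (θ.Sigma g) ≤ Real.exp E := by
    intro g
    have hg1 : gauss1 z.2 (dotProduct (θ.b g) z.1 + θ.b0 g) (θ.sigma2 g)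
        ≤ Real.exp (-(Real.log smin / 2) - f1 / (2 * smax)) := by
      apply gauss1_le (θ.sigma2_pos g) hsmin (fin_ciInf_le _ g) (fin_le_ciSup _ g)
      calc f1 ≤ (θ.b0 g + dotProduct (θ.b g) z.1 - z.2) ^ 2 := fin_ciInf_le _ g
        _ = (z.2 - (dotProduct (θ.b g) z.1 + θ.b0 g)) ^ 2 := by ring
    have hgd : gaussd d z.1 (θ.mu g) (θ.Sigma g)
        ≤ Real.exp (-((d : ℝ) * Real.log lmin / 2) - f2 / (2 * lmax)) := by
      apply gaussd_le z.1 (θ.mu g) (θ.Sigma_posdef g) hlminpos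
        (fun l => le_trans (fin_ciInf_le (fun g' => ⨅ l', θ.eigval g' l') g) (fin_ciInf_le _ l))
        (fun l => le_trans (fin_le_ciSup (fun l' => θ.eigval g l') l)
          (fin_le_ciSup (fun g' => ⨆ l', θ.eigval g' l') g))
        (fin_ciInf_le _ g)
    calc gauss1 z.2 (dotProduct (θ.b g) z.1 + θ.b0 g) (θ.sigma2 g)
          * gaussd d z.1 (θ.mu g) (θ.Sigma g)
        ≤ Real.exp (-(Real.log smin / 2) - f1 / (2 * smax))
          * Real.exp (-((d : ℝ) * Real.log lmin / 2) - f2 / (2 * lmax)) := by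
          apply mul_le_mul hg1 hgd _ (Real.exp_nonneg _)
          · unfold gaussd
            have := (θ.Sigma_posdef g).det_pos
            positivity
      _ = Real.exp E := by
          rw [← Real.exp_add, hE_def]
          congr 1
          ring
  calc Dfun θ z = ∑ g, gauss1 z.2 (dotProduct (θ.b g) z.1 + θ.b0 g) (θ.sigma2 g)
        * gaussd d z.1 (θ.mu g) (θ.Sigma g) * θ.pi g := rfl
    _ ≤ ∑ g, Real.exp E * θ.pi g :=
        Finset.sum_le_sum fun g _ => mul_le_mul_of_nonneg_right (hT g) (θ.pi_nonneg g)
    _ = Real.exp E := by rw [← Finset.mul_sum, θ.pi_sum, mul_one]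

lemma Dfun_measurable (θ : CWMParam d G) : Measurable (Dfun θ) := by
  apply Finset.measurable_sum
  intro g _
  unfold Dg gauss1 gaussd
  simp only [dotProduct, Matrix.mulVec, Pi.sub_apply]
  apply Measurable.mul _ measurable_const
  apply Measurable.mul
  · apply Measurable.mul measurable_const
    apply Real.measurable_exp.comp
    apply Measurable.div _ measurable_const
    apply Measurable.neg
    apply Measurable.pow _ measurable_const
    apply Measurable.sub measurable_snd
    apply Measurable.add _ measurable_const
    exact Finset.measurable_sum _ fun i _ =>
      (measurable_const.mul ((measurable_pi_apply i).comp measurable_fst))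
  · apply Measurable.mul measurable_const
    apply Real.measurable_exp.comp
    apply Measurable.div _ measurable_const
    apply Measurable.neg
    exact Finset.measurable_sum _ fun i _ =>
      (((measurable_pi_apply i).comp measurable_fst).sub measurable_const).mul
        (Finset.measurable_sum _ fun j _ => measurable_const.mul
          (((measurable_pi_apply j).comp measurable_fst).sub measurable_const))

lemma f1_measurable (θ : CWMParam d G) :
    Measurable (fun z : Vec d × ℝ => ⨅ g : Fin G, (θ.b0 g + dotProduct (θ.b g) z.1 - z.2) ^ 2) := by
  apply Measurable.iInf
  intro g
  simp only [dotProduct]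
  apply Measurable.pow _ measurable_const
  apply Measurable.sub _ measurable_snd
  apply Measurable.add measurable_const
  exact Finset.measurable_sum _ fun i _ =>
    measurable_const.mul ((measurable_pi_apply i).comp measurable_fst)

lemma f2_measurable (θ : CWMParam d G) :
    Measurable (fun z : Vec d × ℝ => ⨅ g : Fin G, ∑ i, (z.1 i - θ.mu g i) ^ 2) := by
  apply Measurable.iInf
  intro g
  exact Finset.measurable_sum _ fun i _ =>
    (((measurable_pi_apply i).comp measurable_fst).sub measurable_const).pow measurable_const


end Aux

/-- uniform upper bound for the trimmed log-likelihood in terms of the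
smallest/largest error variances and scatter eigenvalues. -/
theorem statement6 (d G : ℕ) (hd : 1 ≤ d) (hG : 1 ≤ G) (α : ℝ)
    (hα : α ∈ Set.Ioo (0 : ℝ) 1) :
    ∃ C : ℝ, ∀ P : Measure (Vec d × ℝ), IsProbabilityMeasure P →
      ∀ θ : CWMParam d G,
        Lfun α θ P ≤
          -(1 / 2) * (Real.log (⨅ g, θ.sigma2 g) * (P (Aset α θ P)).toReal
              + (∫ z in Aset α θ P,
                  (⨅ g : Fin G, (θ.b0 g + dotProduct (θ.b g) z.1 - z.2) ^ 2) ∂P)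
                / (⨆ g, θ.sigma2 g))
          - (1 / 2) * ((d : ℝ) * Real.log (⨅ g : Fin G, ⨅ l : Fin d, θ.eigval g l)
                * (P (Aset α θ P)).toReal
              + (∫ z in Aset α θ P, (⨅ g : Fin G, ∑ i, (z.1 i - θ.mu g i) ^ 2) ∂P)
                / (⨆ g : Fin G, ⨆ l : Fin d, θ.eigval g l))
          + C := by
  refine ⟨0, fun P hP θ => ?_⟩
  haveI hdn : Nonempty (Fin d) := Fin.pos_iff_nonempty.mp hd
  haveI hGn : Nonempty (Fin G) := Fin.pos_iff_nonempty.mp hG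
  obtain ⟨hα0, hα1⟩ := hα
  set A := Aset α θ P with hA_def
  set PA := (P A).toReal with hPA_def
  set smin := ⨅ g, θ.sigma2 g with hsmin_def
  set smax := ⨆ g, θ.sigma2 g with hsmax_def
  set lmin := ⨅ g : Fin G, ⨅ l : Fin d, θ.eigval g l with hlmin_def
  set lmax := ⨆ g : Fin G, ⨆ l : Fin d, θ.eigval g l with hlmax_def
  set f1 : Vec d × ℝ → ℝ :=
    fun z => ⨅ g : Fin G, (θ.b0 g + dotProduct (θ.b g) z.1 - z.2) ^ 2 with hf1_def
  set f2 : Vec d × ℝ → ℝ :=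
    fun z => ⨅ g : Fin G, ∑ i, (z.1 i - θ.mu g i) ^ 2 with hf2_def
  have hsmin : 0 < smin := fin_ciInf_pos θ.sigma2_pos
  have hsmax : 0 < smax :=
    lt_of_lt_of_le (θ.sigma2_pos (Classical.arbitrary _)) (fin_le_ciSup _ _)
  have hlmin : 0 < lmin :=
    fin_ciInf_pos fun g => fin_ciInf_pos fun l => (θ.Sigma_posdef g).eigenvalues_pos l
  have hlmax : 0 < lmax := by
    have g0 : Fin G := Classical.arbitrary _
    have l0 : Fin d := Classical.arbitrary _
    have h1 : θ.eigval g0 l0 ≤ ⨆ l, θ.eigval g0 l := fin_le_ciSup (fun l => θ.eigval g0 l) l0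
    have h2 : (⨆ l, θ.eigval g0 l) ≤ lmax := fin_le_ciSup (fun g => ⨆ l, θ.eigval g l) g0
    exact lt_of_lt_of_le ((θ.Sigma_posdef g0).eigenvalues_pos l0) (le_trans h1 h2)
  set K : ℝ := -(Real.log smin / 2) - (d : ℝ) * Real.log lmin / 2 with hK_def
  set F : Vec d × ℝ → ℝ := fun z => K - f1 z / (2 * smax) - f2 z / (2 * lmax) with hF_def
  have hf1nn : ∀ z, 0 ≤ f1 z := fun z => le_ciInf fun g => sq_nonneg _
  have hf2nn : ∀ z, 0 ≤ f2 z := fun z =>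
    le_ciInf fun g => Finset.sum_nonneg fun i _ => sq_nonneg _
  have hpt : ∀ z, Dfun θ z ≤ Real.exp (F z) := by
    intro z
    have h := Dfun_le θ z
    have he : F z = -(Real.log smin / 2) - (d : ℝ) * Real.log lmin / 2
        - f1 z / (2 * smax) - f2 z / (2 * lmax) := by rw [hF_def, hK_def]
    rw [he]
    exact h
  have hDpos : ∀ z, 0 < Dfun θ z := fun z => Dfun_pos θ z
  have hFK : ∀ z, F z ≤ K := by
    intro z
    have h1 : 0 ≤ f1 z / (2 * smax) := div_nonneg (hf1nn z) (by positivity)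
    have h2 : 0 ≤ f2 z / (2 * lmax) := div_nonneg (hf2nn z) (by positivity)
    rw [hF_def]
    dsimp only
    linarith
  have hDub : ∀ z, Dfun θ z ≤ Real.exp K := fun z =>
    le_trans (hpt z) (Real.exp_le_exp.2 (hFK z))
  have hlog : ∀ z, Real.log (Dfun θ z) ≤ F z := fun z =>
    (Real.log_le_iff_le_exp (hDpos z)).2 (hpt z)
  -- the trimming threshold is positive
  have hbdd : BddAbove {u : ℝ | 1 - α ≤ (P {z | u ≤ Dfun θ z}).toReal} := by
    refine ⟨Real.exp K, fun u hu => ?_⟩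
    by_contra hc
    push_neg at hc
    have hempty : {z | u ≤ Dfun θ z} = ∅ := by
      ext z
      simp only [Set.mem_setOf_eq, Set.mem_empty_iff_false, iff_false, not_le]
      exact lt_of_le_of_lt (hDub z) hc
    simp only [Set.mem_setOf_eq] at hu
    rw [hempty] at hu
    simp only [measure_empty, ENNReal.toReal_zero] at hu
    linarith
  have hmemS : ∃ u : ℝ, 0 < u ∧ 1 - α ≤ (P {z | u ≤ Dfun θ z}).toReal := by
    set E : ℕ → Set (Vec d × ℝ) := fun n => {z | 1 / ((n : ℝ) + 1) ≤ Dfun θ z} with hE_def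
    have hmono : Monotone E := by
      intro n m hnm z hz
      simp only [hE_def, Set.mem_setOf_eq] at hz ⊢
      refine le_trans ?_ hz
      apply one_div_le_one_div_of_le (by positivity)
      have : (n : ℝ) ≤ (m : ℝ) := Nat.cast_le.2 hnm
      linarith
    have hunion : ⋃ n, E n = Set.univ := by
      ext z
      simp only [Set.mem_iUnion, Set.mem_univ, iff_true]
      obtain ⟨n, hn⟩ := exists_nat_one_div_lt (hDpos z)
      exact ⟨n, hn.le⟩
    have ht := tendsto_measure_iUnion_atTop (μ := P) hmono
    rw [hunion, measure_univ] at ht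
    have ht2 : Tendsto (fun n => (P (E n)).toReal) atTop (𝓝 1) := by
      have h3 := (ENNReal.tendsto_toReal (by norm_num : (1 : ENNReal) ≠ ⊤)).comp ht
      exact h3
    have hev : ∀ᶠ n in atTop, 1 - α < (P (E n)).toReal :=
      ht2.eventually (eventually_gt_nhds (by linarith))
    obtain ⟨n, hn⟩ := hev.exists
    exact ⟨1 / ((n : ℝ) + 1), by positivity, hn.le⟩
  obtain ⟨u0, hu0pos, hu0mem⟩ := hmemS
  have hR : 0 < Rfun α θ P :=
    lt_of_lt_of_le hu0pos (le_csSup hbdd hu0mem)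
  have hDmeas : Measurable (Dfun θ) := Dfun_measurable θ
  have hAmeas : MeasurableSet A := by
    rw [hA_def]
    unfold Aset
    exact measurableSet_le measurable_const hDmeas
  have hAz : ∀ z ∈ A, Rfun α θ P ≤ Dfun θ z := fun z hz => hz
  have hlogA : ∀ z ∈ A, Real.log (Rfun α θ P) ≤ Real.log (Dfun θ z) := fun z hz =>
    Real.log_le_log hR (hAz z hz)
  have hf1A : ∀ z ∈ A, f1 z ≤ 2 * smax * (K - Real.log (Rfun α θ P)) := by
    intro z hz
    have h1 : Real.log (Rfun α θ P) ≤ F z := le_trans (hlogA z hz) (hlog z)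
    have h2 : 0 ≤ f2 z / (2 * lmax) := div_nonneg (hf2nn z) (by positivity)
    have hFz : F z = K - f1 z / (2 * smax) - f2 z / (2 * lmax) := by rw [hF_def]
    have h3 : f1 z / (2 * smax) ≤ K - Real.log (Rfun α θ P) := by
      rw [hFz] at h1; linarith
    calc f1 z = f1 z / (2 * smax) * (2 * smax) := by field_simp
      _ ≤ (K - Real.log (Rfun α θ P)) * (2 * smax) :=
          mul_le_mul_of_nonneg_right h3 (by positivity)
      _ = 2 * smax * (K - Real.log (Rfun α θ P)) := by ring
  have hf2A : ∀ z ∈ A, f2 z ≤ 2 * lmax * (K - Real.log (Rfun α θ P)) := by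
    intro z hz
    have h1 : Real.log (Rfun α θ P) ≤ F z := le_trans (hlogA z hz) (hlog z)
    have h2 : 0 ≤ f1 z / (2 * smax) := div_nonneg (hf1nn z) (by positivity)
    have hFz : F z = K - f1 z / (2 * smax) - f2 z / (2 * lmax) := by rw [hF_def]
    have h3 : f2 z / (2 * lmax) ≤ K - Real.log (Rfun α θ P) := by
      rw [hFz] at h1; linarith
    calc f2 z = f2 z / (2 * lmax) * (2 * lmax) := by field_simp
      _ ≤ (K - Real.log (Rfun α θ P)) * (2 * lmax) :=
          mul_le_mul_of_nonneg_right h3 (by positivity)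
      _ = 2 * lmax * (K - Real.log (Rfun α θ P)) := by ring
  -- integrability
  have hIlog : IntegrableOn (fun z => Real.log (Dfun θ z)) A P := by
    apply Measure.integrableOn_of_bounded (M := max |Real.log (Rfun α θ P)| |K|)
      (measure_ne_top P A) (hDmeas.log.aestronglyMeasurable)
    rw [ae_restrict_iff' hAmeas]
    refine ae_of_all _ fun z hz => ?_
    rw [Real.norm_eq_abs, abs_le]
    constructor
    · have h1 := hlogA z hz
      have h2 := neg_abs_le (Real.log (Rfun α θ P))
      have h3 := le_max_left |Real.log (Rfun α θ P)| |K|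
      linarith
    · have h1 := le_trans (hlog z) (hFK z)
      have h2 := le_abs_self K
      have h3 := le_max_right |Real.log (Rfun α θ P)| |K|
      linarith
  have hIf1 : IntegrableOn f1 A P := by
    apply Measure.integrableOn_of_bounded (M := 2 * smax * (K - Real.log (Rfun α θ P)))
      (measure_ne_top P A) (f1_measurable θ).aestronglyMeasurable
    rw [ae_restrict_iff' hAmeas]
    refine ae_of_all _ fun z hz => ?_
    rw [Real.norm_eq_abs, abs_of_nonneg (hf1nn z)]
    exact hf1A z hz
  have hIf2 : IntegrableOn f2 A P := by
    apply Measure.integrableOn_of_bounded (M := 2 * lmax * (K - Real.log (Rfun α θ P)))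
      (measure_ne_top P A) (f2_measurable θ).aestronglyMeasurable
    rw [ae_restrict_iff' hAmeas]
    refine ae_of_all _ fun z hz => ?_
    rw [Real.norm_eq_abs, abs_of_nonneg (hf2nn z)]
    exact hf2A z hz
  have hIconst : IntegrableOn (fun _ : Vec d × ℝ => K) A P :=
    integrableOn_const (measure_ne_top P A)
  have hI12 : IntegrableOn (fun z => K - f1 z / (2 * smax)) A P :=
    hIconst.sub (hIf1.div_const _)
  have hIF : IntegrableOn F A P := hI12.sub (hIf2.div_const _)
  -- the comparison of integrals
  have hmono2 : Lfun α θ P ≤ ∫ z in A, F z ∂P := by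
    unfold Lfun
    exact setIntegral_mono_on hIlog hIF hAmeas fun z _ => hlog z
  have hsplit : ∫ z in A, F z ∂P
      = K * PA - (∫ z in A, f1 z ∂P) / (2 * smax) - (∫ z in A, f2 z ∂P) / (2 * lmax) := by
    calc ∫ z in A, F z ∂P
        = ∫ z in A, ((K - f1 z / (2 * smax)) - f2 z / (2 * lmax)) ∂P := rfl
      _ = (∫ z in A, (K - f1 z / (2 * smax)) ∂P) - ∫ z in A, f2 z / (2 * lmax) ∂P :=
          integral_sub hI12 (hIf2.div_const _)
      _ = ((∫ _z in A, K ∂P) - ∫ z in A, f1 z / (2 * smax) ∂P)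
            - ∫ z in A, f2 z / (2 * lmax) ∂P := by
          rw [integral_sub hIconst (hIf1.div_const _)]
      _ = K * PA - (∫ z in A, f1 z ∂P) / (2 * smax) - (∫ z in A, f2 z ∂P) / (2 * lmax) := by
          rw [setIntegral_const, integral_div, integral_div, smul_eq_mul, mul_comm, measureReal_def]
  have hfinal : K * PA - (∫ z in A, f1 z ∂P) / (2 * smax) - (∫ z in A, f2 z ∂P) / (2 * lmax)
      = -(1 / 2) * (Real.log smin * PA + (∫ z in A, f1 z ∂P) / smax)
        - (1 / 2) * ((d : ℝ) * Real.log lmin * PA + (∫ z in A, f2 z ∂P) / lmax) + 0 := by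
    rw [hK_def]
    field_simp
    ring
  calc Lfun α θ P ≤ ∫ z in A, F z ∂P := hmono2
    _ = _ := hsplit
    _ = _ := hfinal

end
end

section
/- For every Borel probability measure P on ℝ^d × ℝ and every trimming level α ∈ (0,1), the supremum of the trimmed log-likelihood functional over the constrained parameter set is finite from below: sup_{θ ∈ Θ_{c_X,c_ε}} L(θ,P) > −∞. -/
open MeasureTheory Filter Topology Matrix

noncomputable section

variable {d G : ℕ}

/-- The trivial parameter: equal weights, zero means, identity scatter, zero regression. -/
def theta0 (d G : ℕ) (hG : 1 ≤ G) : CWMParam d G where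
  pi := fun _ => (G : ℝ)⁻¹
  mu := fun _ => 0
  Sigma := fun _ => 1
  b0 := fun _ => 0
  b := fun _ => 0
  sigma2 := fun _ => 1
  pi_nonneg := fun _ => by positivity
  pi_sum := by
    simp only [Finset.sum_const, Finset.card_univ, Fintype.card_fin, nsmul_eq_mul]
    exact mul_inv_cancel₀ (Nat.cast_ne_zero.mpr (by omega))
  Sigma_posdef := fun _ => Matrix.PosDef.one
  sigma2_pos := fun _ => one_pos

lemma eigval_one {d : ℕ} (h : (1 : Matrix (Fin d) (Fin d) ℝ).PosDef) (l : Fin d) :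
    h.isHermitian.eigenvalues l = 1 := by
  rw [Matrix.IsHermitian.eigenvalues_eq, Matrix.one_mulVec, dotProduct_comm,
    ← EuclideanSpace.inner_eq_star_dotProduct, real_inner_self_eq_norm_sq,
    h.isHermitian.eigenvectorBasis.orthonormal.1 l]
  norm_num

lemma mul_bound {A B c e1 e2 : ℝ} (hA : 0 ≤ A) (hB : 0 ≤ B) (hc : 0 ≤ c)
    (h1 : 0 ≤ e1) (h1' : e1 ≤ 1) (h2 : 0 ≤ e2) (h2' : e2 ≤ 1) :
    A * e1 * (B * e2) * c ≤ A * B * c := by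
  have h12 : e1 * e2 ≤ 1 := mul_le_one₀ h1' h2 h2'
  have habc : 0 ≤ A * B * c := by positivity
  nlinarith [mul_le_mul_of_nonneg_left h12 habc]

lemma measurable_Dfun {d G : ℕ} (θ : CWMParam d G) : Measurable (Dfun θ) := by
  unfold Dfun Dg gauss1 gaussd
  simp only [Matrix.mulVec, dotProduct]
  fun_prop

/-- the supremum of the trimmed log-likelihood over the constrained set is
bounded from below, i.e. some parameter has a trimmed log-likelihood greater than `-∞`
(its negative part is integrable on the trimming set). -/
theorem statement8 (d G : ℕ) (hd : 1 ≤ d) (hG : 1 ≤ G) (cX ceps α : ℝ)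
    (hcX : 1 ≤ cX) (hceps : 1 ≤ ceps) (hα : α ∈ Set.Ioo (0 : ℝ) 1)
    (P : Measure (Vec d × ℝ)) [IsProbabilityMeasure P] :
    ∃ θ ∈ ThetaSet d G cX ceps,
      ∫⁻ z in Aset α θ P, ENNReal.ofReal (-(Real.log (Dfun θ z))) ∂P < ⊤ := by
  obtain ⟨hα0, hα1⟩ := hα
  set θ : CWMParam d G := theta0 d G hG with hθ
  have hGpos : (0 : ℝ) < G := by exact_mod_cast hG
  refine ⟨θ, ⟨fun g1 g2 l1 l2 => ?_, fun g1 g2 => ?_⟩, ?_⟩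
  · show θ.eigval g1 l1 ≤ cX * θ.eigval g2 l2
    have e1 : θ.eigval g1 l1 = 1 := eigval_one (θ.Sigma_posdef g1) l1
    have e2 : θ.eigval g2 l2 = 1 := eigval_one (θ.Sigma_posdef g2) l2
    rw [e1, e2]; linarith
  · show θ.sigma2 g1 ≤ ceps * θ.sigma2 g2
    simpa [hθ, theta0] using hceps
  -- Basic facts about the density of θ.
  have hDpos : ∀ z, 0 < Dfun θ z := by
    intro z
    have : ∀ g : Fin G, 0 < Dg θ g z := by
      intro g
      unfold Dg gauss1 gaussd
      simp only [hθ, theta0, Matrix.det_one, Real.sqrt_one, inv_one,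
        Matrix.one_mulVec, sub_zero, mul_one]
      have h2π : (0:ℝ) < 2 * Real.pi := by positivity
      positivity
    exact Finset.sum_pos (fun g _ => this g) ⟨⟨0, hG⟩, Finset.mem_univ _⟩
  set M : ℝ := (Real.sqrt (2 * Real.pi))⁻¹ * (2 * Real.pi) ^ (-(d:ℝ)/2) with hM
  have hMpos : 0 < M := by
    have h2π : (0:ℝ) < 2 * Real.pi := by positivity
    have := Real.rpow_pos_of_pos h2π (-(d:ℝ)/2)
    positivity
  have hDle : ∀ z, Dfun θ z ≤ M := by
    intro z
    have hterm : ∀ g : Fin G, Dg θ g z ≤ M * (G:ℝ)⁻¹ := by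
      intro g
      unfold Dg gauss1 gaussd
      simp only [hθ, theta0, Matrix.det_one, Real.sqrt_one, inv_one,
        Matrix.one_mulVec, sub_zero, mul_one, inv_one]
      have h2π : (0:ℝ) < 2 * Real.pi := by positivity
      have hr : (0:ℝ) < (2 * Real.pi) ^ (-(d:ℝ)/2) := Real.rpow_pos_of_pos h2π _
      rw [hM]
      refine le_trans (mul_bound (by positivity) hr.le (by positivity) (Real.exp_nonneg _)
        (Real.exp_le_one_iff.mpr (by nlinarith [sq_nonneg (z.2 - (dotProduct 0 z.1 + 0))]))
        (Real.exp_nonneg _)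
        (Real.exp_le_one_iff.mpr (by
          have : (0:ℝ) ≤ dotProduct z.1 z.1 :=
            Finset.sum_nonneg fun i _ => mul_self_nonneg _
          linarith))) (le_of_eq (by ring))
    calc Dfun θ z = ∑ g, Dg θ g z := rfl
      _ ≤ ∑ _g : Fin G, M * (G:ℝ)⁻¹ := Finset.sum_le_sum fun g _ => hterm g
      _ = (G:ℝ) * (M * (G:ℝ)⁻¹) := by
          simp [Finset.sum_const, Finset.card_univ, nsmul_eq_mul]
      _ = M := by field_simp
  -- The threshold is strictly positive.
  set S : Set ℝ := {u : ℝ | 1 - α ≤ (P {z | u ≤ Dfun θ z}).toReal} with hS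
  have hbdd : BddAbove S := by
    refine ⟨M, fun u hu => ?_⟩
    by_contra hMu
    push_neg at hMu
    have : {z | u ≤ Dfun θ z} = ∅ := by
      ext z
      simp only [Set.mem_setOf_eq, Set.mem_empty_iff_false, iff_false, not_le]
      exact (hDle z).trans_lt hMu
    rw [hS] at hu
    simp only [Set.mem_setOf_eq, this, measure_empty, ENNReal.toReal_zero] at hu
    linarith
  -- find a positive element of S via continuity from below
  have hmono : Monotone (fun n : ℕ => {z : Vec d × ℝ | ((n:ℝ)+1)⁻¹ ≤ Dfun θ z}) := by
    intro n m hnm z hz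
    simp only [Set.mem_setOf_eq] at hz ⊢
    refine le_trans ?_ hz
    gcongr
    all_goals exact_mod_cast hnm
  have hunion : (⋃ n : ℕ, {z : Vec d × ℝ | ((n:ℝ)+1)⁻¹ ≤ Dfun θ z}) = Set.univ := by
    ext z
    simp only [Set.mem_iUnion, Set.mem_setOf_eq, Set.mem_univ, iff_true]
    obtain ⟨n, hn⟩ := exists_nat_one_div_lt (hDpos z)
    exact ⟨n, by rw [← one_div]; exact hn.le⟩
  have htend := tendsto_measure_iUnion_atTop (μ := P) (s := fun n : ℕ => {z : Vec d × ℝ | ((n:ℝ)+1)⁻¹ ≤ Dfun θ z}) hmono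
  rw [hunion, measure_univ] at htend
  have hlt : ENNReal.ofReal (1 - α) < 1 := by
    rw [ENNReal.ofReal_lt_one]; linarith
  obtain ⟨n, hn⟩ := (htend.eventually (eventually_gt_nhds hlt)).exists
  have hu0S : ((n:ℝ)+1)⁻¹ ∈ S := by
    rw [hS]
    exact (ENNReal.ofReal_le_iff_le_toReal (measure_ne_top P _)).mp hn.le
  have hu0pos : (0:ℝ) < ((n:ℝ)+1)⁻¹ := by positivity
  have hRpos : ((n:ℝ)+1)⁻¹ ≤ Rfun α θ P := le_csSup hbdd hu0S
  -- measurability of the trimming set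
  have hAm : MeasurableSet (Aset α θ P) := by
    have : Aset α θ P = Dfun θ ⁻¹' Set.Ici (Rfun α θ P) := rfl
    rw [this]
    exact (measurable_Dfun θ) measurableSet_Ici
  -- bound the integral
  calc ∫⁻ z in Aset α θ P, ENNReal.ofReal (-(Real.log (Dfun θ z))) ∂P
      ≤ ∫⁻ _z in Aset α θ P, ENNReal.ofReal (-(Real.log (((n:ℝ)+1)⁻¹))) ∂P := by
        apply lintegral_mono_ae
        apply ae_restrict_of_forall_mem hAm
        intro z hz
        apply ENNReal.ofReal_le_ofReal
        have hzD : ((n:ℝ)+1)⁻¹ ≤ Dfun θ z := le_trans hRpos hz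
        have := Real.log_le_log hu0pos hzD
        linarith
    _ = ENNReal.ofReal (-(Real.log (((n:ℝ)+1)⁻¹))) * P (Aset α θ P) := by
        rw [lintegral_const, Measure.restrict_apply MeasurableSet.univ, Set.univ_inter]
    _ < ⊤ := ENNReal.mul_lt_top ENNReal.ofReal_lt_top (measure_lt_top P _)

end
end
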